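/- The space Z (continuous functions g on [0,1] with 2^n ω(g,δ(n)) → 0 and norm |g|_{∞,ω}) is separable. -/

import Mathlib

open MeasureTheory Filter Set

noncomputable section

def modContC (f : C(Set.Icc (0:ℝ) 1, ℝ)) (δ : ℝ) : ℝ :=
  sSup {y | ∃ (h : ℝ) (t : Set.Icc (0:ℝ) 1), |h| ≤ δ ∧
    y = |f (Set.projIcc (0:ℝ) 1 zero_le_one ((t : ℝ) + h)) - f t|}

def memZ (δseq : ℕ → ℝ) (f : C(Set.Icc (0:ℝ) 1, ℝ)) : Prop :=
  Filter.Tendsto (fun n => (2:ℝ)^n * modContC f (δseq n)) Filter.atTop (nhds 0)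

def Znorm (δseq : ℕ → ℝ) (f : C(Set.Icc (0:ℝ) 1, ℝ)) : ℝ :=
  ‖f‖ + ⨆ n : ℕ, (2:ℝ)^n * modContC f (δseq n)

namespace ZSep

abbrev I01 : Set ℝ := Set.Icc (0:ℝ) 1

noncomputable def pr (x : ℝ) : I01 := Set.projIcc (0:ℝ) 1 zero_le_one x

instance : Nonempty I01 := ⟨⟨0, le_refl _, zero_le_one⟩⟩

lemma pr_coe (t : I01) : pr ((t : ℝ)) = t := Set.projIcc_val zero_le_one t

lemma pr_dist (x y : ℝ) : |((pr x : I01) : ℝ) - ((pr y : I01) : ℝ)| ≤ |x - y| := by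
  have := (LipschitzWith.projIcc (a := (0:ℝ)) (b := 1) zero_le_one).dist_le_mul x y
  simpa [pr, Subtype.dist_eq, Real.dist_eq] using this

lemma modSet_def (f : C(I01, ℝ)) (δ : ℝ) :
    modContC f δ = sSup {y | ∃ (h : ℝ) (t : I01), |h| ≤ δ ∧
      y = |f (pr ((t : ℝ) + h)) - f t|} := rfl

lemma bddAbove_modSet (f : C(I01, ℝ)) (δ : ℝ) :
    BddAbove {y | ∃ (h : ℝ) (t : I01), |h| ≤ δ ∧
      y = |f (pr ((t : ℝ) + h)) - f t|} := by
  refine ⟨2 * ‖f‖, ?_⟩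
  rintro y ⟨h, t, -, rfl⟩
  have h1 := f.norm_coe_le_norm (pr ((t : ℝ) + h))
  have h2 := f.norm_coe_le_norm t
  simp only [Real.norm_eq_abs] at h1 h2
  calc |f (pr ((t : ℝ) + h)) - f t| ≤ |f (pr ((t : ℝ) + h))| + |f t| := abs_sub _ _
    _ ≤ 2 * ‖f‖ := by linarith

lemma zero_mem_modSet (f : C(I01, ℝ)) {δ : ℝ} (hδ : 0 ≤ δ) :
    (0:ℝ) ∈ {y | ∃ (h : ℝ) (t : I01), |h| ≤ δ ∧
      y = |f (pr ((t : ℝ) + h)) - f t|} := by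
  refine ⟨0, ⟨0, le_refl _, zero_le_one⟩, by simpa using hδ, ?_⟩
  rw [add_zero, pr_coe]
  simp

lemma modContC_nonneg (f : C(I01, ℝ)) {δ : ℝ} (hδ : 0 ≤ δ) : 0 ≤ modContC f δ := by
  rw [modSet_def]
  exact le_csSup (bddAbove_modSet f δ) (zero_mem_modSet f hδ)

lemma abs_le_modContC (f : C(I01, ℝ)) {δ h : ℝ} (t : I01) (hh : |h| ≤ δ) :
    |f (pr ((t : ℝ) + h)) - f t| ≤ modContC f δ := by
  rw [modSet_def]
  exact le_csSup (bddAbove_modSet f δ) ⟨h, t, hh, rfl⟩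

lemma modContC_le (f : C(I01, ℝ)) {δ c : ℝ} (hc : 0 ≤ c)
    (H : ∀ (h : ℝ) (t : I01), |h| ≤ δ → |f (pr ((t : ℝ) + h)) - f t| ≤ c) :
    modContC f δ ≤ c := by
  rw [modSet_def]
  refine Real.sSup_le ?_ hc
  rintro y ⟨h, t, hh, rfl⟩
  exact H h t hh

lemma modContC_mono (f : C(I01, ℝ)) {a b : ℝ} (ha : 0 ≤ a) (hab : a ≤ b) :
    modContC f a ≤ modContC f b := by
  rw [modSet_def, modSet_def]
  apply csSup_le_csSup (bddAbove_modSet f b)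
  · exact ⟨_, 0, ⟨0, le_refl _, zero_le_one⟩, by simpa using ha, rfl⟩
  · rintro y ⟨h, t, hh, rfl⟩
    exact ⟨h, t, hh.trans hab, rfl⟩

lemma modContC_le_two_norm (f : C(I01, ℝ)) {δ : ℝ} (hδ : 0 ≤ δ) :
    modContC f δ ≤ 2 * ‖f‖ := by
  refine modContC_le f (by positivity) ?_
  intro h t _
  have h1 := f.norm_coe_le_norm (pr ((t : ℝ) + h))
  have h2 := f.norm_coe_le_norm t
  simp only [Real.norm_eq_abs] at h1 h2
  calc |f (pr ((t : ℝ) + h)) - f t| ≤ |f (pr ((t : ℝ) + h))| + |f t| := abs_sub _ _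
    _ ≤ 2 * ‖f‖ := by linarith

lemma modContC_sub_le (f g : C(I01, ℝ)) {δ : ℝ} (hδ : 0 ≤ δ) :
    modContC (f - g) δ ≤ modContC f δ + modContC g δ := by
  refine modContC_le _ (by
    have := modContC_nonneg f hδ; have := modContC_nonneg g hδ; linarith) ?_
  intro h t hh
  have h1 := abs_le_modContC f t hh
  have h2 := abs_le_modContC g t hh
  simp only [ContinuousMap.sub_apply]
  calc |f (pr (↑t + h)) - g (pr (↑t + h)) - (f t - g t)|
      = |(f (pr (↑t + h)) - f t) - (g (pr (↑t + h)) - g t)| := by ring_nf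
    _ ≤ |f (pr (↑t + h)) - f t| + |g (pr (↑t + h)) - g t| := abs_sub _ _
    _ ≤ modContC f δ + modContC g δ := add_le_add h1 h2

lemma modContC_lip (g : C(I01, ℝ)) {L δ : ℝ} (hL : 0 ≤ L) (hδ : 0 ≤ δ)
    (Hg : ∀ s t : I01, |g s - g t| ≤ L * |(s : ℝ) - (t : ℝ)|) :
    modContC g δ ≤ L * δ := by
  refine modContC_le g (by positivity) ?_
  intro h t hh
  calc |g (pr (↑t + h)) - g t| ≤ L * |((pr (↑t + h) : I01) : ℝ) - (t : ℝ)| := Hg _ _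
    _ ≤ L * |h| := by
        refine mul_le_mul_of_nonneg_left ?_ hL
        have := pr_dist ((t : ℝ) + h) (t : ℝ)
        rw [pr_coe] at this
        simpa using this
    _ ≤ L * δ := mul_le_mul_of_nonneg_left hh hL


-- key decomposition lemma
lemma exists_split {a b h : ℝ} (ha : 0 ≤ a) (hb : 0 ≤ b) (hab : 0 < a + b)
    (t : I01) (hh : |h| ≤ a + b) :
    ∃ (h₁ h₂ : ℝ), |h₁| ≤ a ∧ |h₂| ≤ b ∧
      pr ((t : ℝ) + h) = pr (((pr ((t : ℝ) + h₁) : I01) : ℝ) + h₂) := by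
  set h₁ : ℝ := h * (a / (a + b)) with hh₁
  have hh1 : |h₁| ≤ a := by
    rw [hh₁, abs_mul, abs_of_nonneg (by positivity : (0:ℝ) ≤ a / (a+b))]
    calc |h| * (a / (a + b)) ≤ (a + b) * (a / (a + b)) := by
          exact mul_le_mul_of_nonneg_right hh (by positivity)
      _ = a := by field_simp
  have hraw : |h - h₁| ≤ b := by
    have : h - h₁ = h * (b / (a + b)) := by rw [hh₁]; field_simp; ring
    rw [this, abs_mul, abs_of_nonneg (by positivity : (0:ℝ) ≤ b / (a+b))]
    calc |h| * (b / (a + b)) ≤ (a + b) * (b / (a + b)) := by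
          exact mul_le_mul_of_nonneg_right hh (by positivity)
      _ = b := by field_simp
  have ht := t.2
  rcases le_or_gt ((t:ℝ) + h₁) 1 with hle | hgt
  · rcases le_or_gt 0 ((t:ℝ) + h₁) with hge | hlt
    · -- in range
      refine ⟨h₁, h - h₁, hh1, hraw, ?_⟩
      have : pr ((t:ℝ) + h₁) = ⟨(t:ℝ) + h₁, hge, hle⟩ := Set.projIcc_of_mem _ ⟨hge, hle⟩
      rw [this]
      congr 1
      ring
    · -- clamped to 0
      have hneg : h₁ < 0 := by
        have := ht.1; linarith
      have hhneg : h < 0 := by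
        rcases lt_trichotomy h 0 with h0 | h0 | h0
        · exact h0
        · exfalso; rw [hh₁, h0] at hneg; simp at hneg
        · exfalso
          have : 0 ≤ h₁ := by rw [hh₁]; positivity
          linarith
      have hhh₁ : h ≤ h₁ := by
        have : h₁ - h = (-h) * (b / (a+b)) := by rw [hh₁]; field_simp; ring
        nlinarith [mul_nonneg (by linarith : (0:ℝ) ≤ -h) (by positivity : (0:ℝ) ≤ b/(a+b))]
      have hth : (t:ℝ) + h < 0 := by linarith
      have e1 : pr ((t:ℝ) + h₁) = ⟨0, le_refl _, zero_le_one⟩ :=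
        Set.projIcc_of_le_left _ (by linarith)
      have e2 : pr ((t:ℝ) + h) = ⟨0, le_refl _, zero_le_one⟩ :=
        Set.projIcc_of_le_left _ (by linarith)
      refine ⟨h₁, max (-b) ((t:ℝ) + h), hh1, ?_, ?_⟩
      · rw [abs_le]
        constructor
        · exact le_max_left _ _
        · apply max_le (by linarith) (by linarith [ht.1])
      · rw [e1, e2]
        exact (Set.projIcc_of_le_left _ (by
          simp only [zero_add]
          exact max_le (by linarith) (by linarith))).symm
  · -- clamped to 1
    have hpos : 0 < h₁ := by
      have := ht.2; linarith
    have hhpos : 0 < h := by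
      rcases lt_trichotomy h 0 with h0 | h0 | h0
      · exfalso
        have : h₁ ≤ 0 := by
          rw [hh₁]
          exact mul_nonpos_of_nonpos_of_nonneg (le_of_lt h0) (by positivity)
        linarith
      · exfalso; rw [hh₁, h0] at hpos; simp at hpos
      · exact h0
    have hhh₁ : h₁ ≤ h := by
      have : h - h₁ = h * (b / (a+b)) := by rw [hh₁]; field_simp; ring
      nlinarith [mul_nonneg (le_of_lt hhpos) (by positivity : (0:ℝ) ≤ b/(a+b))]
    have hth : 1 < (t:ℝ) + h := by linarith
    have e1 : pr ((t:ℝ) + h₁) = ⟨1, zero_le_one, le_refl _⟩ :=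
      Set.projIcc_of_right_le _ (by linarith)
    have e2 : pr ((t:ℝ) + h) = ⟨1, zero_le_one, le_refl _⟩ :=
      Set.projIcc_of_right_le _ (by linarith)
    refine ⟨h₁, min b ((t:ℝ) + h - 1), hh1, ?_, ?_⟩
    · rw [abs_le]
      refine ⟨le_min (by linarith) (by linarith [ht.2]), min_le_left _ _⟩
    · rw [e1, e2]
      exact (Set.projIcc_of_right_le _ (by
        have h0 : (0:ℝ) ≤ min b ((t:ℝ) + h - 1) := le_min hb (by linarith)
        have : (1:ℝ) ≤ 1 + min b ((t:ℝ) + h - 1) := by linarith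
        simpa using this)).symm

lemma modContC_add_le (f : C(I01, ℝ)) {a b : ℝ} (ha : 0 ≤ a) (hb : 0 ≤ b) :
    modContC f (a + b) ≤ modContC f a + modContC f b := by
  have hnn : 0 ≤ modContC f a + modContC f b := by
    have := modContC_nonneg f ha; have := modContC_nonneg f hb; linarith
  refine modContC_le f hnn ?_
  intro h t hh
  rcases eq_or_lt_of_le (by linarith : (0:ℝ) ≤ a + b) with h0 | hab
  · have hh0 : h = 0 := by
      rw [← h0] at hh
      exact abs_eq_zero.mp (le_antisymm hh (abs_nonneg h))
    rw [hh0, add_zero, pr_coe]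
    simpa using hnn
  · obtain ⟨h₁, h₂, hh1, hh2, heq⟩ := exists_split ha hb hab t hh
    set t' : I01 := pr ((t : ℝ) + h₁) with ht'
    calc |f (pr ((t:ℝ) + h)) - f t|
        ≤ |f (pr ((t:ℝ) + h)) - f t'| + |f t' - f t| := abs_sub_le _ _ _
      _ ≤ modContC f b + modContC f a := by
          apply add_le_add
          · rw [heq]; exact abs_le_modContC f t' hh2
          · exact abs_le_modContC f t hh1
      _ = modContC f a + modContC f b := add_comm _ _

lemma modContC_nsmul (f : C(I01, ℝ)) {δ : ℝ} (hδ : 0 ≤ δ) :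
    ∀ k : ℕ, modContC f (k * δ) ≤ k * modContC f δ := by
  intro k
  induction k with
  | zero => simpa using modContC_le f (le_refl _) (fun h t hh => by
      have : h = 0 := by simpa using le_antisymm (by simpa using hh) (abs_nonneg h)
      rw [this, add_zero, pr_coe]; simp)
  | succ k ih =>
      have : ((k:ℝ) + 1) * δ = k * δ + δ := by ring
      push_cast
      rw [this]
      calc modContC f (k * δ + δ) ≤ modContC f (k*δ) + modContC f δ :=
            modContC_add_le f (by positivity) hδ
        _ ≤ k * modContC f δ + modContC f δ := by linarith
        _ = ((k:ℝ) + 1) * modContC f δ := by ring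

lemma modContC_div_le (f : C(I01, ℝ)) {δ b : ℝ} (hδ : 0 < δ) (hb : 0 ≤ b) :
    modContC f b ≤ (b / δ + 1) * modContC f δ := by
  set k : ℕ := ⌈b / δ⌉₊ with hk
  have h1 : b ≤ k * δ := by
    rw [hk]
    calc b = (b / δ) * δ := by field_simp
      _ ≤ (⌈b/δ⌉₊ : ℝ) * δ := mul_le_mul_of_nonneg_right (Nat.le_ceil _) (le_of_lt hδ)
  have h2 : (k:ℝ) ≤ b / δ + 1 := by
    rw [hk]
    have := Nat.ceil_lt_add_one (by positivity : (0:ℝ) ≤ b / δ)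
    linarith
  calc modContC f b ≤ modContC f (k * δ) := modContC_mono f hb h1
    _ ≤ k * modContC f δ := modContC_nsmul f (le_of_lt hδ) k
    _ ≤ (b / δ + 1) * modContC f δ :=
        mul_le_mul_of_nonneg_right h2 (modContC_nonneg f (le_of_lt hδ))

lemma exists_small_mod (f : C(I01, ℝ)) {c : ℝ} (hc : 0 < c) :
    ∃ u : ℝ, 0 < u ∧ modContC f u ≤ c := by
  have huc : UniformContinuous (f : I01 → ℝ) :=
    CompactSpace.uniformContinuous_of_continuous f.continuous
  obtain ⟨u, hu, H⟩ := Metric.uniformContinuous_iff.mp huc c hc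
  refine ⟨u / 2, by positivity, ?_⟩
  refine modContC_le f (le_of_lt hc) ?_
  intro h t hh
  have hd : dist (pr ((t:ℝ) + h)) t < u := by
    have h1 : dist (pr ((t:ℝ) + h)) t = |((pr ((t:ℝ)+h) : I01) : ℝ) - (t:ℝ)| := by
      rw [Subtype.dist_eq, Real.dist_eq]
    have h2 := (LipschitzWith.projIcc (a := (0:ℝ)) (b := 1) zero_le_one).dist_le_mul
      ((t:ℝ) + h) (t:ℝ)
    rw [h1]
    have h3 : ((pr ((t:ℝ)+h) : I01) : ℝ) - (t:ℝ) =
        ((Set.projIcc (0:ℝ) 1 zero_le_one ((t:ℝ)+h) : I01) : ℝ) -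
        ((Set.projIcc (0:ℝ) 1 zero_le_one (t:ℝ) : I01) : ℝ) := by
      rw [show Set.projIcc (0:ℝ) 1 zero_le_one (t:ℝ) = t from Set.projIcc_val zero_le_one t]
      rfl
    rw [h3]
    calc |_ - _| ≤ 1 * dist ((t:ℝ) + h) (t:ℝ) := by
          have := h2; rw [Subtype.dist_eq] at this; simpa [Real.dist_eq] using this
      _ = |h| := by rw [one_mul, Real.dist_eq]; simp
      _ ≤ u / 2 := hh
      _ < u := by linarith
  exact le_of_lt (H hd)


/-- piecewise linear interpolation of the values `q i` at nodes `i/m`. -/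
def plinAux (q : ℕ → ℝ) (m : ℕ) (x : ℝ) : ℝ :=
  q ⌊x * m⌋₊ + (x * m - ⌊x * m⌋₊) * (q (⌊x * m⌋₊ + 1) - q ⌊x * m⌋₊)

lemma q_diff (q : ℕ → ℝ) (C : ℝ) (hq : ∀ i, |q (i+1) - q i| ≤ C) :
    ∀ a b : ℕ, a ≤ b → |q b - q a| ≤ C * ((b:ℝ) - a) := by
  have key : ∀ (d a : ℕ), |q (a + d) - q a| ≤ C * d := by
    intro d
    induction d with
    | zero => intro a; simp
    | succ d ih =>
        intro a
        have h1 := ih a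
        have h2 := hq (a + d)
        calc |q (a + (d+1)) - q a| = |(q (a+d+1) - q (a+d)) + (q (a+d) - q a)| := by
              rw [show a + (d+1) = a + d + 1 by omega]; ring_nf
          _ ≤ |q (a+d+1) - q (a+d)| + |q (a+d) - q a| := abs_add_le _ _
          _ ≤ C + C * d := add_le_add h2 h1
          _ = C * ((d:ℝ) + 1) := by ring
          _ = C * ((d+1:ℕ) : ℝ) := by push_cast; ring
  intro a b hab
  obtain ⟨d, rfl⟩ := Nat.exists_eq_add_of_le hab
  have := key d a
  have e : ((a + d : ℕ):ℝ) - (a:ℝ) = (d:ℝ) := by push_cast; ring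
  rw [e]
  exact this

lemma plin_lip (q : ℕ → ℝ) (C : ℝ) (m : ℕ) (hC : 0 ≤ C)
    (hq : ∀ i, |q (i+1) - q i| ≤ C) {x y : ℝ} (hx : 0 ≤ x) (hxy : x ≤ y) :
    |plinAux q m y - plinAux q m x| ≤ C * (m * (y - x)) := by
  set j : ℕ := ⌊x * m⌋₊ with hj
  set k : ℕ := ⌊y * m⌋₊ with hk
  have hy : 0 ≤ y := le_trans hx hxy
  have hxm : 0 ≤ x * m := by positivity
  have hym : 0 ≤ y * m := by positivity
  have hj1 : (j:ℝ) ≤ x * m := Nat.floor_le hxm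
  have hj2 : x * m < (j:ℝ) + 1 := by exact_mod_cast Nat.lt_floor_add_one (x*m)
  have hk1 : (k:ℝ) ≤ y * m := Nat.floor_le hym
  have hk2 : y * m < (k:ℝ) + 1 := by exact_mod_cast Nat.lt_floor_add_one (y*m)
  have hjk : j ≤ k := Nat.floor_le_floor (by nlinarith)
  rcases eq_or_lt_of_le hjk with heq | hlt
  · have e : plinAux q m y - plinAux q m x = (y*m - x*m) * (q (k+1) - q k) := by
      simp only [plinAux, ← hj, ← hk, ← heq]
      ring
    rw [e, abs_mul]
    have h1 : |y*m - x*m| = m * (y - x) := by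
      rw [abs_of_nonneg (by nlinarith)]; ring
    rw [h1]
    calc m * (y-x) * |q (k+1) - q k| ≤ m * (y-x) * C :=
          mul_le_mul_of_nonneg_left (hq k) (by nlinarith)
      _ = C * (m * (y - x)) := by ring
  · have b1 : |plinAux q m x - q (j+1)| ≤ C * ((j:ℝ) + 1 - x*m) := by
      have e : plinAux q m x - q (j+1) = (q (j+1) - q j) * (x*m - j - 1) := by
        simp only [plinAux, ← hj]; ring
      rw [e, abs_mul]
      have h1 : |x*m - (j:ℝ) - 1| = (j:ℝ) + 1 - x*m := by
        rw [abs_of_nonpos (by linarith)]; ring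
      rw [h1]
      exact mul_le_mul_of_nonneg_right (hq j) (by linarith)
    have b3 : |plinAux q m y - q k| ≤ C * (y*m - (k:ℝ)) := by
      have e : plinAux q m y - q k = (y*m - k) * (q (k+1) - q k) := by
        simp only [plinAux, ← hk]; ring
      rw [e, abs_mul]
      have h1 : |y*m - (k:ℝ)| = y*m - (k:ℝ) := abs_of_nonneg (by linarith)
      rw [h1]
      calc (y*m - (k:ℝ)) * |q (k+1) - q k| ≤ (y*m - (k:ℝ)) * C :=
            mul_le_mul_of_nonneg_left (hq k) (by linarith)
        _ = C * (y*m - (k:ℝ)) := by ring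
    have b2 : |q k - q (j+1)| ≤ C * ((k:ℝ) - ((j:ℝ)+1)) := by
      have := q_diff q C hq (j+1) k hlt
      have e : ((k:ℝ) - ((j+1:ℕ):ℝ)) = (k:ℝ) - ((j:ℝ)+1) := by push_cast; ring
      rw [← e]
      exact this
    calc |plinAux q m y - plinAux q m x|
        ≤ |plinAux q m y - q k| + |q k - plinAux q m x| := abs_sub_le _ _ _
      _ ≤ |plinAux q m y - q k| + (|q k - q (j+1)| + |q (j+1) - plinAux q m x|) := by
          gcongr; exact abs_sub_le _ _ _
      _ ≤ C * (y*m - (k:ℝ)) + (C * ((k:ℝ) - ((j:ℝ)+1)) + C * ((j:ℝ) + 1 - x*m)) :=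
          add_le_add b3 (add_le_add b2 (by rw [abs_sub_comm]; exact b1))
      _ = C * (m * (y - x)) := by ring

lemma grid_close (f : C(I01, ℝ)) (m : ℕ) (i : ℕ) (t : I01)
    (ht : |(i:ℝ)/m - (t:ℝ)| ≤ 1/m) :
    |f (pr ((i:ℝ)/m)) - f t| ≤ modContC f (1/(m:ℝ)) := by
  have := abs_le_modContC f (δ := 1/m) (h := (i:ℝ)/m - (t:ℝ)) t ht
  have e : ((t:ℝ) + ((i:ℝ)/m - (t:ℝ))) = (i:ℝ)/m := by ring
  rw [e] at this
  exact this

lemma plin_approx (f : C(I01, ℝ)) (m : ℕ) (hm : 1 ≤ m) (q : ℕ → ℝ) (ρ : ℝ)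
    (hq : ∀ i ≤ m, |q i - f (pr ((i:ℝ)/m))| ≤ ρ) (t : I01) :
    |plinAux q m (t:ℝ) - f t| ≤ ρ + modContC f (1/(m:ℝ)) := by
  have hm0 : 0 < (m:ℝ) := by exact_mod_cast hm
  have hρ : 0 ≤ ρ := le_trans (abs_nonneg _) (hq 0 (by omega))
  set x : ℝ := (t:ℝ) with hxdef
  have hx0 : 0 ≤ x := t.2.1
  have hx1 : x ≤ 1 := t.2.2
  set k : ℕ := ⌊x * m⌋₊ with hk
  have hxm : 0 ≤ x * m := by positivity
  have hk1 : (k:ℝ) ≤ x * m := Nat.floor_le hxm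
  have hk2 : x * m < (k:ℝ) + 1 := by exact_mod_cast Nat.lt_floor_add_one (x*m)
  have hkm : k ≤ m := by
    have h1 : ⌊x * m⌋₊ ≤ ⌊(m:ℝ)⌋₊ := Nat.floor_le_floor (by nlinarith)
    simpa using h1
  -- grid point k is within 1/m of t
  have hgk : |(k:ℝ)/m - x| ≤ 1/m := by
    have e : (k:ℝ)/m - x = ((k:ℝ) - x*m)/m := by field_simp
    rw [e, abs_div, abs_of_pos hm0]
    gcongr
    rw [abs_le]
    constructor <;> linarith
  have bk : |q k - f t| ≤ ρ + modContC f (1/(m:ℝ)) := by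
    calc |q k - f t| ≤ |q k - f (pr ((k:ℝ)/m))| + |f (pr ((k:ℝ)/m)) - f t| := abs_sub_le _ _ _
      _ ≤ ρ + modContC f (1/(m:ℝ)) := add_le_add (hq k hkm) (grid_close f m k t hgk)
  rcases lt_or_ge k m with hkm' | hkm'
  · -- k+1 ≤ m as well
    have hgk1 : |((k+1:ℕ):ℝ)/m - x| ≤ 1/m := by
      have e : ((k+1:ℕ):ℝ)/m - x = (((k:ℝ)+1) - x*m)/m := by push_cast; field_simp
      rw [e, abs_div, abs_of_pos hm0]
      gcongr
      rw [abs_le]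
      constructor <;> linarith
    have bk1 : |q (k+1) - f t| ≤ ρ + modContC f (1/(m:ℝ)) := by
      calc |q (k+1) - f t| ≤ |q (k+1) - f (pr (((k+1:ℕ):ℝ)/m))| +
            |f (pr (((k+1:ℕ):ℝ)/m)) - f t| := abs_sub_le _ _ _
        _ ≤ ρ + modContC f (1/(m:ℝ)) :=
            add_le_add (hq (k+1) (by omega)) (grid_close f m (k+1) t hgk1)
    have e : plinAux q m x - f t =
        (1 - (x*m - k)) * (q k - f t) + (x*m - k) * (q (k+1) - f t) := by
      simp only [plinAux, ← hk]; ring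
    calc |plinAux q m x - f t|
        = |(1 - (x*m - k)) * (q k - f t) + (x*m - k) * (q (k+1) - f t)| := by rw [e]
      _ ≤ |(1 - (x*m - k)) * (q k - f t)| + |(x*m - k) * (q (k+1) - f t)| := abs_add_le _ _
      _ = (1 - (x*m - k)) * |q k - f t| + (x*m - k) * |q (k+1) - f t| := by
          rw [abs_mul, abs_mul,
            abs_of_nonneg (show (0:ℝ) ≤ 1 - (x*m - (k:ℝ)) by linarith),
            abs_of_nonneg (show (0:ℝ) ≤ x*m - (k:ℝ) by linarith)]
      _ ≤ (1 - (x*m - k)) * (ρ + modContC f (1/(m:ℝ)))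
            + (x*m - k) * (ρ + modContC f (1/(m:ℝ))) :=
          add_le_add (mul_le_mul_of_nonneg_left bk (by linarith))
            (mul_le_mul_of_nonneg_left bk1 (by linarith))
      _ = ρ + modContC f (1/(m:ℝ)) := by ring
  · -- k = m, so x = 1 and x*m = k
    have hkm'' : k = m := le_antisymm hkm hkm'
    have hge : (m:ℝ) ≤ x * m := by
      have := hk1
      rw [hkm''] at this
      exact this
    have hxm1 : x * m = (k:ℝ) := by
      rw [hkm'']
      have : x * m ≤ (m:ℝ) := by nlinarith
      linarith
    have e : plinAux q m x = q k + (x*m - (k:ℝ)) * (q (k+1) - q k) := by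
      simp only [plinAux, ← hk]
    rw [e, hxm1, sub_self, zero_mul, add_zero]
    exact bk


def qext (m : ℕ) (v : Fin (m+1) → ℚ) : ℕ → ℝ :=
  fun i => ((v ⟨min i m, by omega⟩ : ℚ) : ℝ)

def Cq (m : ℕ) (v : Fin (m+1) → ℚ) : ℝ :=
  ∑ i ∈ Finset.range (m+1), |qext m v (i+1) - qext m v i|

lemma Cq_nonneg (m : ℕ) (v : Fin (m+1) → ℚ) : 0 ≤ Cq m v :=
  Finset.sum_nonneg fun _ _ => abs_nonneg _

lemma qext_diff_le (m : ℕ) (v : Fin (m+1) → ℚ) (i : ℕ) :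
    |qext m v (i+1) - qext m v i| ≤ Cq m v := by
  rcases le_or_gt (i+1) (m+1) with hi | hi
  · exact Finset.single_le_sum (f := fun i => |qext m v (i+1) - qext m v i|)
      (fun _ _ => abs_nonneg _) (Finset.mem_range.mpr (by omega))
  · have e : qext m v (i+1) = qext m v i := by
      have efin : (⟨min (i+1) m, by omega⟩ : Fin (m+1)) = ⟨min i m, by omega⟩ := by
        apply Fin.ext
        show min (i+1) m = min i m
        omega
      unfold qext
      rw [efin]
    rw [e, sub_self, abs_zero]
    exact Cq_nonneg m v

lemma pwl_lip_pt (m : ℕ) (v : Fin (m+1) → ℚ) {C : ℝ} (hC : 0 ≤ C)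
    (hq : ∀ i, |qext m v (i+1) - qext m v i| ≤ C) (s t : I01) :
    |plinAux (qext m v) m (s:ℝ) - plinAux (qext m v) m (t:ℝ)| ≤ (C * m) * |(s:ℝ) - (t:ℝ)| := by
  rcases le_total (s:ℝ) (t:ℝ) with hst | hst
  · rw [show |(s:ℝ) - (t:ℝ)| = (t:ℝ) - (s:ℝ) by
      rw [abs_sub_comm]; exact abs_of_nonneg (by linarith)]
    calc |plinAux (qext m v) m (s:ℝ) - plinAux (qext m v) m (t:ℝ)|
        = |plinAux (qext m v) m (t:ℝ) - plinAux (qext m v) m (s:ℝ)| := abs_sub_comm _ _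
      _ ≤ C * (m * ((t:ℝ) - (s:ℝ))) := plin_lip _ C m hC hq s.2.1 hst
      _ = (C * m) * ((t:ℝ) - (s:ℝ)) := by ring
  · rw [abs_of_nonneg (by linarith : (0:ℝ) ≤ (s:ℝ) - (t:ℝ))]
    calc |plinAux (qext m v) m (s:ℝ) - plinAux (qext m v) m (t:ℝ)|
        ≤ C * (m * ((s:ℝ) - (t:ℝ))) := plin_lip _ C m hC hq t.2.1 hst
      _ = (C * m) * ((s:ℝ) - (t:ℝ)) := by ring

def pwl (m : ℕ) (v : Fin (m+1) → ℚ) : C(I01, ℝ) :=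
  ⟨fun t => plinAux (qext m v) m (t:ℝ), by
    have lip : LipschitzWith (Real.toNNReal (Cq m v * m))
        (fun t : I01 => plinAux (qext m v) m (t:ℝ)) := by
      apply LipschitzWith.of_dist_le_mul
      intro s t
      rw [Real.coe_toNNReal _ (mul_nonneg (Cq_nonneg m v) (Nat.cast_nonneg m)),
        Real.dist_eq, Subtype.dist_eq, Real.dist_eq]
      exact pwl_lip_pt m v (Cq_nonneg m v) (qext_diff_le m v) s t
    exact lip.continuous⟩

lemma pwl_apply (m : ℕ) (v : Fin (m+1) → ℚ) (t : I01) :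
    pwl m v t = plinAux (qext m v) m (t:ℝ) := rfl

lemma modContC_pwl_le (m : ℕ) (v : Fin (m+1) → ℚ) {C δ : ℝ} (hC : 0 ≤ C) (hδ : 0 ≤ δ)
    (hq : ∀ i, |qext m v (i+1) - qext m v i| ≤ C) :
    modContC (pwl m v) δ ≤ (C * m) * δ :=
  modContC_lip _ (mul_nonneg hC (Nat.cast_nonneg m)) hδ (pwl_lip_pt m v hC hq)

def memZ' (δseq : ℕ → ℝ) (f : C(I01, ℝ)) : Prop :=
  Filter.Tendsto (fun n => (2:ℝ)^n * modContC f (δseq n)) Filter.atTop (nhds 0)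

lemma memZ_pwl (δseq : ℕ → ℝ) (hmem : ∀ n, δseq n ∈ Set.Ioc (0:ℝ) 1)
    (hcase : Tendsto (fun n => (2:ℝ)^n * δseq n) atTop (nhds 0))
    (m : ℕ) (v : Fin (m+1) → ℚ) : memZ' δseq (pwl m v) := by
  have key : ∀ n, (2:ℝ)^n * modContC (pwl m v) (δseq n) ≤
      (Cq m v * m) * ((2:ℝ)^n * δseq n) := by
    intro n
    have h1 := modContC_pwl_le m v (Cq_nonneg m v) (le_of_lt (hmem n).1) (qext_diff_le m v)
    calc (2:ℝ)^n * modContC (pwl m v) (δseq n)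
        ≤ (2:ℝ)^n * ((Cq m v * m) * δseq n) := by
          exact mul_le_mul_of_nonneg_left h1 (by positivity)
      _ = (Cq m v * m) * ((2:ℝ)^n * δseq n) := by ring
  have hub : Tendsto (fun n => (Cq m v * m) * ((2:ℝ)^n * δseq n)) atTop (nhds 0) := by
    have := hcase.const_mul (Cq m v * m)
    simpa using this
  apply squeeze_zero (fun n => ?_) key hub
  exact mul_nonneg (by positivity) (modContC_nonneg _ (le_of_lt (hmem n).1))


lemma modContC_zero_of_const (f : C(I01, ℝ)) (hconst : ∀ s t : I01, f s = f t)
    {δ : ℝ} (hδ : 0 ≤ δ) : modContC f δ = 0 :=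
  le_antisymm
    (modContC_le f le_rfl (fun h t _ => by rw [hconst (pr ((t:ℝ) + h)) t]; simp))
    (modContC_nonneg f hδ)

end ZSep

open ZSep

set_option maxHeartbeats 1000000 in
/-- Z is separable: it has a countable subset which is dense for the
|·|_{∞,ω} norm. -/
theorem Z_separable
    (δseq : ℕ → ℝ) (hanti : StrictAnti δseq) (hmem : ∀ n, δseq n ∈ Set.Ioc (0:ℝ) 1)
    (hlim : Tendsto δseq atTop (nhds 0)) :
    ∃ D : Set C(Set.Icc (0:ℝ) 1, ℝ), D.Countable ∧ (∀ g ∈ D, memZ δseq g) ∧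
      ∀ f : C(Set.Icc (0:ℝ) 1, ℝ), memZ δseq f → ∀ ε > 0,
        ∃ g ∈ D, Znorm δseq (f - g) < ε := by
  by_cases hcase : Tendsto (fun n => (2:ℝ)^n * δseq n) atTop (nhds 0)
  · refine ⟨Set.range (fun p : (Σ m : ℕ, Fin (m+1) → ℚ) => pwl p.1 p.2),
      Set.countable_range _, ?_, ?_⟩
    · rintro g ⟨⟨m, v⟩, rfl⟩
      exact memZ_pwl δseq hmem hcase m v
    · intro f hf ε hε
      set ε' := ε / 4 with hε'def
      have hε'pos : 0 < ε' := by positivity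
      -- uniform bound on 2^n δ n
      obtain ⟨S0, hS0⟩ := hcase.bddAbove_range
      set S := max S0 1 with hSdef
      have hS1 : (1:ℝ) ≤ S := le_max_right _ _
      have hSpos : 0 < S := lt_of_lt_of_le one_pos hS1
      have hS : ∀ n, (2:ℝ)^n * δseq n ≤ S :=
        fun n => le_trans (hS0 ⟨n, rfl⟩) (le_max_left _ _)
      -- tail index N
      obtain ⟨N, hN⟩ := Metric.tendsto_atTop.mp hf (ε'/8) (by positivity)
      have hNf : ∀ n, N ≤ n → (2:ℝ)^n * modContC f (δseq n) ≤ ε'/8 := by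
        intro n hn
        have h1 := hN n hn
        rw [Real.dist_eq, sub_zero] at h1
        have hnn : 0 ≤ (2:ℝ)^n * modContC f (δseq n) :=
          mul_nonneg (by positivity) (modContC_nonneg f (le_of_lt (hmem n).1))
        rw [abs_of_nonneg hnn] at h1
        exact le_of_lt h1
      -- mesh
      set c := ε' / 2^(N+3) with hcdef
      have hcpos : 0 < c := by positivity
      obtain ⟨u, hu, hufc⟩ := exists_small_mod f hcpos
      obtain ⟨m0, hm0⟩ := exists_nat_ge (1/u)
      set m := max m0 1 with hmdef
      have hm1 : 1 ≤ m := le_max_right _ _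
      have hmR : (0:ℝ) < m := by exact_mod_cast Nat.lt_of_lt_of_le Nat.zero_lt_one hm1
      have hum : 1/(m:ℝ) ≤ u := by
        have h1 : 1/u ≤ (m:ℝ) := le_trans hm0 (by exact_mod_cast le_max_left m0 1)
        calc 1/(m:ℝ) ≤ 1/(1/u) := one_div_le_one_div_of_le (by positivity) h1
          _ = u := one_div_one_div u
      have hWf : modContC f (1/(m:ℝ)) ≤ c :=
        le_trans (modContC_mono f (by positivity) hum) hufc
      have hWfnn : 0 ≤ modContC f (1/(m:ℝ)) := modContC_nonneg f (by positivity)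
      -- threshold after which δ < 1/m
      obtain ⟨n₀, hn₀⟩ := Metric.tendsto_atTop.mp hlim (1/(m:ℝ)) (by positivity)
      have hn₀' : ∀ n, n₀ ≤ n → δseq n < 1/(m:ℝ) := by
        intro n hn
        have h1 := hn₀ n hn
        rwa [Real.dist_eq, sub_zero, abs_of_pos (hmem n).1] at h1
      -- rational perturbation size
      set ρ := min c (min (ε' / 2^(n₀+3)) (ε' / (8*(m:ℝ)*S))) with hρdef
      have hρpos : 0 < ρ := by
        refine lt_min hcpos (lt_min (by positivity) (by positivity))
      have hρc : ρ ≤ c := min_le_left _ _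
      have hρ1 : ρ ≤ ε' / 2^(n₀+3) := le_trans (min_le_right _ _) (min_le_left _ _)
      have hρ2 : ρ ≤ ε' / (8*(m:ℝ)*S) := le_trans (min_le_right _ _) (min_le_right _ _)
      -- choose rational node values
      have hvex : ∀ i : Fin (m+1), ∃ q : ℚ,
          |(q:ℝ) - f (pr (((i:ℕ):ℝ)/m))| < ρ := by
        intro i
        obtain ⟨q, hq⟩ := exists_rat_near (f (pr (((i:ℕ):ℝ)/m))) hρpos
        exact ⟨q, by rw [abs_sub_comm]; exact hq⟩
      choose v hv using hvex
      refine ⟨pwl m v, ⟨⟨m, v⟩, rfl⟩, ?_⟩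
      have hqv : ∀ i ≤ m, |qext m v i - f (pr ((i:ℝ)/m))| ≤ ρ := by
        intro i hi
        have efin : (⟨min i m, by omega⟩ : Fin (m+1)) = ⟨i, by omega⟩ := by
          apply Fin.ext
          show min i m = i
          omega
        have e : qext m v i = ((v ⟨i, by omega⟩ : ℚ) : ℝ) := by
          unfold qext
          rw [efin]
        rw [e]
        exact le_of_lt (hv ⟨i, by omega⟩)
      -- pointwise closeness
      have hfg_pt : ∀ t : I01, |pwl m v t - f t| ≤ ρ + modContC f (1/(m:ℝ)) :=
        fun t => plin_approx f m hm1 (qext m v) ρ hqv t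
      have hfg_norm : ‖f - pwl m v‖ ≤ ρ + modContC f (1/(m:ℝ)) := by
        rw [ContinuousMap.norm_le _ (by positivity)]
        intro t
        rw [ContinuousMap.sub_apply, Real.norm_eq_abs, abs_sub_comm]
        exact hfg_pt t
      have hfg_norm2 : ‖f - pwl m v‖ ≤ 2*c := le_trans hfg_norm (by linarith)
      -- adjacent node differences
      have hadj : ∀ i, |qext m v (i+1) - qext m v i|
          ≤ modContC f (1/(m:ℝ)) + 2*ρ := by
        intro i
        rcases lt_or_ge i m with hi | hi
        · have e1 := hqv (i+1) (by omega)
          have e2 := hqv i (by omega)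
          have him : ((i:ℝ)/m) ∈ I01 := by
            constructor
            · positivity
            · rw [div_le_one hmR]
              exact_mod_cast le_of_lt hi
          have hpr : ((pr ((i:ℝ)/m) : I01) : ℝ) = (i:ℝ)/m := by
            rw [pr, Set.projIcc_of_mem _ him]
          have emid : |f (pr (((i+1:ℕ):ℝ)/m)) - f (pr ((i:ℝ)/m))|
              ≤ modContC f (1/(m:ℝ)) := by
            have h8 := abs_le_modContC f (δ := 1/(m:ℝ)) (h := 1/(m:ℝ))
              (pr ((i:ℝ)/m)) (by rw [abs_of_nonneg (by positivity : (0:ℝ) ≤ 1/(m:ℝ))])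
            rw [hpr] at h8
            have earg : (i:ℝ)/m + 1/(m:ℝ) = ((i+1:ℕ):ℝ)/m := by
              push_cast
              rw [← add_div]
            rw [earg] at h8
            exact h8
          calc |qext m v (i+1) - qext m v i|
              ≤ |qext m v (i+1) - f (pr (((i+1:ℕ):ℝ)/m))|
                + |f (pr (((i+1:ℕ):ℝ)/m)) - qext m v i| := abs_sub_le _ _ _
            _ ≤ |qext m v (i+1) - f (pr (((i+1:ℕ):ℝ)/m))|
                + (|f (pr (((i+1:ℕ):ℝ)/m)) - f (pr ((i:ℝ)/m))|
                  + |f (pr ((i:ℝ)/m)) - qext m v i|) :=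
                add_le_add le_rfl (abs_sub_le _ _ _)
            _ ≤ ρ + (modContC f (1/(m:ℝ)) + ρ) :=
                add_le_add e1 (add_le_add emid (by rw [abs_sub_comm]; exact e2))
            _ = modContC f (1/(m:ℝ)) + 2*ρ := by ring
        · have efin : (⟨min (i+1) m, by omega⟩ : Fin (m+1)) = ⟨min i m, by omega⟩ := by
            apply Fin.ext
            show min (i+1) m = min i m
            omega
          have e : qext m v (i+1) = qext m v i := by
            unfold qext
            rw [efin]
          rw [e, sub_self, abs_zero]
          positivity
      -- the key uniform bound
      have key : ∀ n, (2:ℝ)^n * modContC (f - pwl m v) (δseq n) ≤ ε' := by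
        intro n
        have hδn := (hmem n).1
        have hδnn : (0:ℝ) ≤ δseq n := le_of_lt hδn
        have hmodnn : 0 ≤ modContC (f - pwl m v) (δseq n) := modContC_nonneg _ hδnn
        have hωnn : 0 ≤ modContC f (δseq n) := modContC_nonneg f hδnn
        rcases lt_or_ge n N with hnN | hnN
        · -- small n : sup-norm bound
          have h1 : modContC (f - pwl m v) (δseq n) ≤ 2 * ‖f - pwl m v‖ :=
            modContC_le_two_norm _ hδnn
          have h2 : modContC (f - pwl m v) (δseq n) ≤ 4*c := by
            calc modContC (f - pwl m v) (δseq n) ≤ 2 * ‖f - pwl m v‖ := h1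
              _ ≤ 2 * (2*c) := by linarith
              _ = 4*c := by ring
          have h3 : (2:ℝ)^n ≤ 2^N := pow_le_pow_right₀ one_le_two (le_of_lt hnN)
          have e2 : (2:ℝ)^N * (4*c) = ε'/2 := by
            have epow : (2:ℝ)^(N+3) = 2^N*8 := by
              rw [pow_add]
              norm_num
            rw [hcdef, epow]
            have hN0 : (2:ℝ)^N ≠ 0 := by positivity
            field_simp
            try ring
          calc (2:ℝ)^n * modContC (f - pwl m v) (δseq n)
              ≤ (2:ℝ)^N * modContC (f - pwl m v) (δseq n) :=
                mul_le_mul_of_nonneg_right h3 hmodnn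
            _ ≤ (2:ℝ)^N * (4*c) := mul_le_mul_of_nonneg_left h2 (by positivity)
            _ = ε'/2 := e2
            _ ≤ ε' := by linarith
        · rcases lt_or_ge (δseq n) (1/(m:ℝ)) with hsmall | hbig
          · -- Lipschitz route
            have hD₀ : (0:ℝ) ≤ modContC f (1/(m:ℝ)) + 2*ρ := by positivity
            have hg : modContC (pwl m v) (δseq n)
                ≤ ((modContC f (1/(m:ℝ)) + 2*ρ) * m) * δseq n :=
              modContC_pwl_le m v hD₀ hδnn hadj
            have hdiv := modContC_div_le f hδn (show (0:ℝ) ≤ 1/(m:ℝ) by positivity)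
            have hmδ : (m:ℝ) * δseq n ≤ 1 := by
              rw [← le_div_iff₀' hmR]
              exact le_of_lt hsmall
            have e1 : (m:ℝ) * δseq n * ((1/(m:ℝ))/δseq n + 1)
                = 1 + (m:ℝ)*δseq n := by
              field_simp
            have h2 : ((m:ℝ)*δseq n) * modContC f (1/(m:ℝ))
                ≤ 2 * modContC f (δseq n) := by
              calc ((m:ℝ)*δseq n) * modContC f (1/(m:ℝ))
                  ≤ ((m:ℝ)*δseq n) * (((1/(m:ℝ))/δseq n + 1) * modContC f (δseq n)) :=
                    mul_le_mul_of_nonneg_left hdiv (by positivity)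
                _ = ((m:ℝ) * δseq n * ((1/(m:ℝ))/δseq n + 1)) * modContC f (δseq n) := by
                    ring
                _ = (1 + (m:ℝ)*δseq n) * modContC f (δseq n) := by rw [e1]
                _ ≤ 2 * modContC f (δseq n) := by nlinarith
            have hρ2' : ρ * (8*(m:ℝ)*S) ≤ ε' := by
              rw [← le_div_iff₀ (by positivity)]
              exact hρ2
            have hsub := modContC_sub_le f (pwl m v) hδnn
            have hNn := hNf n hnN
            have hSn := hS n
            have hρm : (0:ℝ) ≤ 2*ρ*(m:ℝ) :=
              mul_nonneg (mul_nonneg (by norm_num) hρpos.le) (Nat.cast_nonneg m)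
            have A2 : (((m:ℝ)*δseq n) * modContC f (1/(m:ℝ))) * (2:ℝ)^n
                ≤ 2*(ε'/8) := by
              have a1 : (((m:ℝ)*δseq n) * modContC f (1/(m:ℝ))) * (2:ℝ)^n
                  ≤ (2 * modContC f (δseq n)) * (2:ℝ)^n :=
                mul_le_mul_of_nonneg_right h2 (by positivity)
              have a2 : (2 * modContC f (δseq n)) * (2:ℝ)^n
                  = 2*((2:ℝ)^n * modContC f (δseq n)) := by ring
              rw [a2] at a1
              linarith
            have A3 : (2*ρ*(m:ℝ)) * ((2:ℝ)^n * δseq n) ≤ ε'/4 := by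
              have a1 : (2*ρ*(m:ℝ)) * ((2:ℝ)^n * δseq n) ≤ (2*ρ*(m:ℝ)) * S :=
                mul_le_mul_of_nonneg_left hSn hρm
              have a2 : (2*ρ*(m:ℝ)) * S = (ρ * (8*(m:ℝ)*S))/4 := by ring
              rw [a2] at a1
              linarith
            calc (2:ℝ)^n * modContC (f - pwl m v) (δseq n)
                ≤ (2:ℝ)^n * (modContC f (δseq n)
                  + ((modContC f (1/(m:ℝ)) + 2*ρ) * m) * δseq n) :=
                  mul_le_mul_of_nonneg_left
                    (le_trans hsub (add_le_add le_rfl hg)) (by positivity)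
              _ = (2:ℝ)^n * modContC f (δseq n)
                  + (((m:ℝ)*δseq n) * modContC f (1/(m:ℝ))) * (2:ℝ)^n
                  + (2*ρ*(m:ℝ)) * ((2:ℝ)^n * δseq n) := by ring
              _ ≤ ε'/8 + 2*(ε'/8) + ε'/4 := add_le_add (add_le_add hNn A2) A3
              _ ≤ ε' := by linarith
          · -- big δ : sup-norm route with W ≤ ω_n
            have hWfn : modContC f (1/(m:ℝ)) ≤ modContC f (δseq n) :=
              modContC_mono f (by positivity) hbig
            have hn₀n : n < n₀ := by
              by_contra hcon
              push_neg at hcon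
              exact absurd (hn₀' n hcon) (not_lt.mpr hbig)
            have h1 : modContC (f - pwl m v) (δseq n) ≤ 2 * ‖f - pwl m v‖ :=
              modContC_le_two_norm _ hδnn
            have h2 : modContC (f - pwl m v) (δseq n)
                ≤ 2*ρ + 2*modContC f (δseq n) := by
              calc modContC (f - pwl m v) (δseq n) ≤ 2 * ‖f - pwl m v‖ := h1
                _ ≤ 2 * (ρ + modContC f (1/(m:ℝ))) := by linarith
                _ ≤ 2*ρ + 2*modContC f (δseq n) := by linarith
            have h3 : (2:ℝ)^n ≤ 2^n₀ := pow_le_pow_right₀ one_le_two (le_of_lt hn₀n)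
            have hρ1' : (2:ℝ)^(n₀+1) * ρ ≤ ε'/4 := by
              have e3 : (2:ℝ)^(n₀+3) = (2:ℝ)^(n₀+1) * 4 := by
                rw [show n₀+3 = (n₀+1)+2 by omega, pow_add]
                norm_num
              have h4 : ρ * (2:ℝ)^(n₀+3) ≤ ε' := by
                rw [← le_div_iff₀ (by positivity)]
                exact hρ1
              rw [e3] at h4
              nlinarith
            have hNn := hNf n hnN
            have h2ρ : (0:ℝ) ≤ 2*ρ := by linarith
            have B1 : 2*ρ*(2:ℝ)^n ≤ (2:ℝ)^(n₀+1)*ρ := by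
              have b1 : 2*ρ*(2:ℝ)^n ≤ 2*ρ*(2:ℝ)^n₀ :=
                mul_le_mul_of_nonneg_left h3 h2ρ
              have b2 : 2*ρ*(2:ℝ)^n₀ = (2:ℝ)^(n₀+1)*ρ := by
                rw [pow_succ]
                ring
              rw [b2] at b1
              exact b1
            calc (2:ℝ)^n * modContC (f - pwl m v) (δseq n)
                ≤ (2:ℝ)^n * (2*ρ + 2*modContC f (δseq n)) :=
                  mul_le_mul_of_nonneg_left h2 (by positivity)
              _ = 2*ρ*(2:ℝ)^n + 2*((2:ℝ)^n * modContC f (δseq n)) := by ring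
              _ ≤ ε' := by linarith
      -- conclusion
      have hsup : (⨆ n, (2:ℝ)^n * modContC (f - pwl m v) (δseq n)) ≤ ε' :=
        Real.iSup_le key hε'pos.le
      show ‖f - pwl m v‖ + (⨆ n, (2:ℝ)^n * modContC (f - pwl m v) (δseq n)) < ε
      have h2c : 2*c ≤ ε' := by
        have h1 : (8:ℝ) ≤ 2^(N+3) := by
          calc (8:ℝ) = 2^3 := by norm_num
            _ ≤ 2^(N+3) := pow_le_pow_right₀ one_le_two (by omega)
        have h2 : c ≤ ε'/8 := by
          rw [hcdef]
          exact div_le_div_of_nonneg_left hε'pos.le (by norm_num) h1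
        linarith
      calc ‖f - pwl m v‖ + (⨆ n, (2:ℝ)^n * modContC (f - pwl m v) (δseq n))
          ≤ 2*c + ε' := add_le_add hfg_norm2 hsup
        _ ≤ ε' + ε' := by linarith
        _ < ε := by rw [hε'def]; linarith
  · refine ⟨Set.range (fun q : ℚ => ContinuousMap.const I01 ((q:ℝ))),
      Set.countable_range _, ?_, ?_⟩
    · rintro g ⟨q, rfl⟩
      show Tendsto _ atTop (nhds 0)
      have e : (fun n => (2:ℝ)^n * modContC (ContinuousMap.const I01 ((q:ℝ))) (δseq n))
          = fun _ => (0:ℝ) := by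
        funext n
        rw [modContC_zero_of_const _ (fun _ _ => rfl) (le_of_lt (hmem n).1), mul_zero]
      show Tendsto (fun n => (2:ℝ)^n *
        modContC (ContinuousMap.const I01 ((q:ℝ))) (δseq n)) atTop (nhds 0)
      rw [e]
      exact tendsto_const_nhds
    · intro f hf ε hε
      set t₀ : I01 := ⟨0, le_refl _, zero_le_one⟩ with ht₀
      have hconst : ∀ s : I01, f s = f t₀ := by
        by_contra hne
        push_neg at hne
        obtain ⟨s, hs⟩ := hne
        set d := |f s - f t₀| with hd
        have hdpos : 0 < d := abs_pos.mpr (sub_ne_zero.mpr hs)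
        apply hcase
        have key : ∀ n, (2:ℝ)^n * δseq n ≤ (2/d) * ((2:ℝ)^n * modContC f (δseq n)) := by
          intro n
          have hδn := (hmem n).1
          have hδn1 := (hmem n).2
          have hωnn : 0 ≤ modContC f (δseq n) := modContC_nonneg f (le_of_lt hδn)
          have h1 : d ≤ modContC f 1 := by
            have habs : |(s:ℝ) - ((t₀:I01):ℝ)| ≤ 1 := by
              have h0 : ((t₀:I01):ℝ) = 0 := rfl
              rw [h0, sub_zero, abs_of_nonneg s.2.1]
              exact s.2.2
            have h2 := abs_le_modContC f (h := (s:ℝ) - ((t₀:I01):ℝ)) t₀ habs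
            rw [show ((t₀:I01):ℝ) + ((s:ℝ) - ((t₀:I01):ℝ)) = (s:ℝ) by ring, pr_coe] at h2
            exact h2
          have h2 := modContC_div_le f hδn zero_le_one
          have h3 : (1:ℝ)/δseq n + 1 ≤ 2/δseq n := by
            rw [div_add' _ _ _ (ne_of_gt hδn), div_le_div_iff₀ hδn hδn]
            nlinarith
          have h4 : d ≤ (2/δseq n) * modContC f (δseq n) :=
            le_trans (le_trans h1 h2) (mul_le_mul_of_nonneg_right h3 hωnn)
          have h5 : d * δseq n ≤ 2 * modContC f (δseq n) := by
            have h6 := mul_le_mul_of_nonneg_right h4 (le_of_lt hδn)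
            have e : (2/δseq n) * modContC f (δseq n) * δseq n
                = 2 * modContC f (δseq n) := by field_simp
            rw [e] at h6
            exact h6
          rw [div_mul_eq_mul_div, le_div_iff₀ hdpos]
          have h7 := mul_le_mul_of_nonneg_left h5
            (le_of_lt (pow_pos (show (0:ℝ) < 2 by norm_num) n))
          calc (2:ℝ)^n * δseq n * d = (2:ℝ)^n * (d * δseq n) := by ring
            _ ≤ (2:ℝ)^n * (2 * modContC f (δseq n)) := h7
            _ = 2 * ((2:ℝ)^n * modContC f (δseq n)) := by ring
        have hub : Tendsto (fun n => (2/d) * ((2:ℝ)^n * modContC f (δseq n)))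
            atTop (nhds 0) := by simpa using hf.const_mul (2/d)
        exact squeeze_zero
          (fun n => mul_nonneg (by positivity) (le_of_lt (hmem n).1)) key hub
      obtain ⟨q, hq⟩ := exists_rat_near (f t₀) (half_pos hε)
      refine ⟨ContinuousMap.const I01 ((q:ℝ)), ⟨q, rfl⟩, ?_⟩
      have hfgconst : ∀ u w : I01,
          (f - ContinuousMap.const I01 ((q:ℝ))) u
            = (f - ContinuousMap.const I01 ((q:ℝ))) w := by
        intro u w
        simp only [ContinuousMap.sub_apply, ContinuousMap.const_apply, hconst u, hconst w]
      have hsup : (⨆ n, (2:ℝ)^n *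
          modContC (f - ContinuousMap.const I01 ((q:ℝ))) (δseq n)) = 0 := by
        have e : (fun n => (2:ℝ)^n *
            modContC (f - ContinuousMap.const I01 ((q:ℝ))) (δseq n)) = fun _ => (0:ℝ) := by
          funext n
          rw [modContC_zero_of_const _ hfgconst (le_of_lt (hmem n).1), mul_zero]
        rw [e]
        exact ciSup_const
      have hnorm : ‖f - ContinuousMap.const I01 ((q:ℝ))‖ < ε/2 := by
        rw [ContinuousMap.norm_lt_iff _ (half_pos hε)]
        intro x
        rw [ContinuousMap.sub_apply, Real.norm_eq_abs, ContinuousMap.const_apply, hconst x]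
        exact hq
      show ‖f - ContinuousMap.const I01 ((q:ℝ))‖ + _ < ε
      rw [hsup]
      linarith
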